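/- Let L ∈ T. Then the core L_c is a perfect ideal of L, i.e., [L_c, L_c] = L_c and [L, L_c] ⊆ L_c. -/

import Mathlib

open scoped Classical

namespace Gen

variable (F L : Type*) [Field F] [CharZero F] [LieRing L] [LieAlgebra F L]

/-- The weight space of a linear functional `α` on a subalgebra `H`. -/
def wt (H : LieSubalgebra F L) (α : Module.Dual F H) : Submodule F L where
  carrier := {x : L | ∀ h : H, ⁅(h : L), x⁆ = α h • x}
  add_mem' := by
    intro a b ha hb h
    rw [lie_add, ha h, hb h, smul_add]
  zero_mem' := by intro h; simp
  smul_mem' := by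
    intro c x hx h
    rw [lie_smul, hx h, smul_comm]

/-- Data for axioms (T1) and (T2): a non-degenerate symmetric invariant bilinear form,
a finite dimensional split toral subalgebra `H` on which the form is non-degenerate,
together with the representatives `t_α ∈ H` of linear functionals on `H`. -/
structure TData where
  B : L →ₗ[F] L →ₗ[F] F
  bsymm : ∀ x y, B x y = B y x
  binv : ∀ x y z, B ⁅x, y⁆ z = B x ⁅y, z⁆
  bnondeg : ∀ x, (∀ y, B x y = 0) → x = 0
  H : LieSubalgebra F L
  hne : H ≠ ⊥
  hfin : FiniteDimensional F H
  hnondeg : ∀ h : H, (∀ h' : H, B h h' = 0) → h = 0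
  decomp : DirectSum.IsInternal (wt F L H)
  t : Module.Dual F H → H
  tspec : ∀ (α : Module.Dual F H) (h : H), B (t α) h = α h

variable {F L}

namespace TData

variable (T : TData F L)

/-- The form transferred to the dual of `H`: `(α, β) = (t_α, t_β)`. -/
def pr (α β : Module.Dual F T.H) : F := T.B (T.t α) (T.t β)

/-- The root system `R = {α : L_α ≠ 0}`. -/
def R : Set (Module.Dual F T.H) := {α | wt F L T.H α ≠ ⊥}

/-- Non-isotropic roots. -/
def Rx : Set (Module.Dual F T.H) := {α | α ∈ T.R ∧ T.pr α α ≠ 0}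

/-- Isotropic roots. -/
def R0 : Set (Module.Dual F T.H) := {α | α ∈ T.R ∧ T.pr α α = 0}

/-- The core: the subalgebra generated by the non-isotropic root spaces. -/
def core : LieSubalgebra F L :=
  LieSubalgebra.lieSpan F L (⋃ α ∈ T.Rx, (wt F L T.H α : Set L))

end TData

variable (F L)

/-- A Lie algebra in the class 𝒯: axioms (T1)–(T6). -/
structure TAlg extends TData F L where
  t3a : ∀ δ ∈ toTData.R0, ∃ x ∈ wt F L toTData.H δ, ∃ y ∈ wt F L toTData.H (-δ),
          ⁅x, y⁆ = (toTData.t δ : L)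
  t3b : ∀ α ∈ toTData.Rx, ∀ x ∈ wt F L toTData.H α, x ≠ 0 →
          ∃ y ∈ wt F L toTData.H (-α), ⁅x, y⁆ = (toTData.t α : L)
  t4 : ∀ α ∈ toTData.Rx, ∀ x ∈ wt F L toTData.H α, ∀ y : L,
          ∃ n : ℕ, ((LieAlgebra.ad F L x) ^ n) y = 0
  t5a : ∀ S1 S2 : Set (Module.Dual F toTData.H), S1.Nonempty → S2.Nonempty →
          S1 ∪ S2 = toTData.Rx → Disjoint S1 S2 →
          ∃ a ∈ S1, ∃ b ∈ S2, toTData.pr a b ≠ 0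
  t5b : ∀ δ ∈ toTData.R0, ∃ α ∈ toTData.Rx, α + δ ∈ toTData.R
  t6free : Module.Free ℤ (AddSubgroup.closure toTData.R0)
  t6fin : Module.Finite ℤ (AddSubgroup.closure toTData.R0)

end Gen
set_option linter.unusedSectionVars false

namespace Gen

variable {F L : Type*} [Field F] [CharZero F] [LieRing L] [LieAlgebra F L]

section basic

variable {H : LieSubalgebra F L}

lemma mem_wt {α : Module.Dual F H} {x : L} :
    x ∈ wt F L H α ↔ ∀ h : H, ⁅(h : L), x⁆ = α h • x := Iff.rfl

lemma lie_wt {α β : Module.Dual F H} {x y : L}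
    (hx : x ∈ wt F L H α) (hy : y ∈ wt F L H β) : ⁅x, y⁆ ∈ wt F L H (α + β) := by
  intro h
  have hlz := leibniz_lie (h : L) x y
  rw [hx h, hy h, smul_lie, lie_smul] at hlz
  rw [hlz, LinearMap.add_apply, add_smul]

lemma wt_congr {α β : Module.Dual F H} (h : α = β) : wt F L H α = wt F L H β := by rw [h]

end basic

namespace TData

variable (T : TData F L)

lemma t_sub_eq_zero {α : Module.Dual F T.H} {h : T.H}
    (hh : ∀ h' : T.H, T.B h h' = α h') : h = T.t α := by
  have h0 : h - T.t α = 0 := by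
    apply T.hnondeg
    intro h'
    have : ((h - T.t α : T.H) : L) = (h : L) - (T.t α : L) := rfl
    rw [this, map_sub, LinearMap.sub_apply, hh h', T.tspec α h', sub_self]
  have := sub_eq_zero.mp h0
  exact this

lemma t_add (α β : Module.Dual F T.H) : T.t (α + β) = T.t α + T.t β := by
  refine (T.t_sub_eq_zero ?_).symm
  intro h'
  have : ((T.t α + T.t β : T.H) : L) = (T.t α : L) + (T.t β : L) := rfl
  rw [this, map_add, LinearMap.add_apply, T.tspec α h', T.tspec β h']
  rfl

lemma t_smul (c : F) (α : Module.Dual F T.H) : T.t (c • α) = c • T.t α := by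
  refine (T.t_sub_eq_zero ?_).symm
  intro h'
  have : ((c • T.t α : T.H) : L) = c • (T.t α : L) := rfl
  rw [this, map_smul, LinearMap.smul_apply, T.tspec α h']
  rfl

lemma t_neg (α : Module.Dual F T.H) : T.t (-α) = - T.t α := by
  have h1 := T.t_smul (-1) α
  rw [neg_smul, one_smul] at h1
  have h2 : (-1 : F) • α = -α := by module
  rw [h2] at h1
  exact h1

lemma pr_eq (α β : Module.Dual F T.H) : T.pr α β = α (T.t β) := T.tspec α (T.t β)

lemma pr_symm (α β : Module.Dual F T.H) : T.pr α β = T.pr β α := T.bsymm _ _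

lemma pr_add_right (α β γ : Module.Dual F T.H) :
    T.pr α (β + γ) = T.pr α β + T.pr α γ := by
  unfold TData.pr
  rw [t_add]
  have h1 : ((T.t β + T.t γ : T.H) : L) = (T.t β : L) + (T.t γ : L) := rfl
  rw [h1, map_add]

lemma pr_add_left (α β γ : Module.Dual F T.H) :
    T.pr (α + β) γ = T.pr α γ + T.pr β γ := by
  rw [T.pr_symm (α + β) γ, T.pr_add_right γ α β, T.pr_symm γ α, T.pr_symm γ β]

lemma pr_smul_right (c : F) (α β : Module.Dual F T.H) :
    T.pr α (c • β) = c * T.pr α β := by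
  unfold TData.pr
  rw [t_smul]
  have h1 : ((c • T.t β : T.H) : L) = c • (T.t β : L) := rfl
  rw [h1, map_smul, smul_eq_mul]

lemma pr_smul_left (c : F) (α β : Module.Dual F T.H) :
    T.pr (c • α) β = c * T.pr α β := by
  rw [T.pr_symm (c • α) β, T.pr_smul_right c β α, T.pr_symm β α]

lemma pr_neg_right (α β : Module.Dual F T.H) : T.pr α (-β) = - T.pr α β := by
  unfold TData.pr
  rw [t_neg]
  have h1 : ((-T.t β : T.H) : L) = -(T.t β : L) := rfl
  rw [h1, map_neg]

lemma pr_neg_left (α β : Module.Dual F T.H) : T.pr (-α) β = - T.pr α β := by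
  rw [T.pr_symm (-α) β, T.pr_neg_right β α, T.pr_symm β α]

/-- The action of `t β` on a weight vector. -/
lemma lie_t {δ : Module.Dual F T.H} {y : L} (hy : y ∈ wt F L T.H δ)
    (β : Module.Dual F T.H) : ⁅((T.t β : T.H) : L), y⁆ = T.pr δ β • y := by
  rw [hy (T.t β), T.pr_eq δ β]

lemma ad_pow_wt {β δ : Module.Dual F T.H} {e x : L}
    (he : e ∈ wt F L T.H β) (hx : x ∈ wt F L T.H δ) (n : ℕ) :
    ((LieAlgebra.ad F L e) ^ n) x ∈ wt F L T.H (δ + (n : F) • β) := by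
  induction n with
  | zero => simpa using hx
  | succ n ih =>
      have h1 : ((LieAlgebra.ad F L e) ^ (n + 1)) x
          = ⁅e, ((LieAlgebra.ad F L e) ^ n) x⁆ := by
        rw [pow_succ', Module.End.mul_apply]; rfl
      rw [h1]
      have h2 := lie_wt he ih
      have h3 : β + (δ + (n : F) • β) = δ + ((n : F) + 1) • β := by module
      rw [h3] at h2
      have h4 : ((n : ℕ) + 1 : ℕ) = n + 1 := rfl
      have h5 : (((n + 1 : ℕ) : F)) = (n : F) + 1 := by push_cast; ring
      rw [wt_congr (by rw [h5])]
      exact h2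

end TData

end Gen
namespace Gen

namespace TAlg

variable {F L : Type*} [Field F] [CharZero F] [LieRing L] [LieAlgebra F L]
variable (T : TAlg F L)

/-- sl₂ integrality: `2 (β', β) / (β, β)` is an integer whenever `β` is a
non-isotropic root and `β'` is a root. -/
lemma int_lemma {β' β : Module.Dual F T.toTData.H}
    (ha : T.toTData.pr β β ≠ 0) {e x : L}
    (he : e ∈ wt F L T.toTData.H β) (hene : e ≠ 0)
    (hx : x ∈ wt F L T.toTData.H β') (hxne : x ≠ 0) :
    ∃ z : ℤ, 2 * T.toTData.pr β' β = (z : F) * T.toTData.pr β β := by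
  have hβR : β ∈ T.toTData.Rx := ⟨(Submodule.ne_bot_iff _).mpr ⟨e, he, hene⟩, ha⟩
  obtain ⟨f, hf, hef⟩ := T.t3b β hβR e he hene
  have htβ : ((T.toTData.t β : T.toTData.H) : L) ≠ 0 := by
    intro h0
    apply ha
    have h1 : T.toTData.pr β β
        = T.toTData.B ((T.toTData.t β : T.toTData.H) : L) ((T.toTData.t β : T.toTData.H) : L) :=
      rfl
    rw [h1, h0]
    simp
  have hfne : f ≠ 0 := by rintro rfl; rw [lie_zero] at hef; exact htβ hef.symm
  have hprneg : T.toTData.pr (-β) (-β) = T.toTData.pr β β := by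
    rw [T.toTData.pr_neg_left, T.toTData.pr_neg_right, neg_neg]
  have hnegR : -β ∈ T.toTData.Rx :=
    ⟨(Submodule.ne_bot_iff _).mpr ⟨f, hf, hfne⟩, by rw [hprneg]; exact ha⟩
  have nilE : ∀ y : L, ∃ n : ℕ, ((LieAlgebra.ad F L e) ^ n) y = 0 := T.t4 β hβR e he
  have nilF : ∀ y : L, ∃ n : ℕ, ((LieAlgebra.ad F L f) ^ n) y = 0 := T.t4 (-β) hnegR f hf
  -- climb to a primitive vector `v`
  have hEx := nilE x
  set n₁ := Nat.find hEx with hn₁def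
  have hn₁spec : ((LieAlgebra.ad F L e) ^ n₁) x = 0 := Nat.find_spec hEx
  have hn₁pos : 0 < n₁ := by
    rcases Nat.eq_zero_or_pos n₁ with h | h
    · exfalso; apply hxne; rw [h] at hn₁spec; simpa using hn₁spec
    · exact h
  set p := n₁ - 1 with hpdef
  set v := ((LieAlgebra.ad F L e) ^ p) x with hvdef
  have hvne : v ≠ 0 := Nat.find_min hEx (by omega)
  have hev : ⁅e, v⁆ = 0 := by
    have h1 : ((LieAlgebra.ad F L e) ^ (p + 1)) x = 0 := by
      have h2 : p + 1 = n₁ := by omega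
      rw [h2]; exact hn₁spec
    rw [pow_succ', Module.End.mul_apply] at h1
    simpa [LieAlgebra.ad_apply] using h1
  have hvwt : v ∈ wt F L T.toTData.H (β' + (p : F) • β) := T.toTData.ad_pow_wt he hx p
  -- descend from the primitive vector
  have hFv := nilF v
  set n₂ := Nat.find hFv with hn₂def
  have hn₂spec : ((LieAlgebra.ad F L f) ^ n₂) v = 0 := Nat.find_spec hFv
  have hn₂pos : 0 < n₂ := by
    rcases Nat.eq_zero_or_pos n₂ with h | h
    · exfalso; apply hvne; rw [h] at hn₂spec; simpa using hn₂spec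
    · exact h
  set m := n₂ - 1 with hmdef
  set w : ℕ → L := fun j => ((LieAlgebra.ad F L f) ^ j) v with hwdef
  have hwm : w m ≠ 0 := Nat.find_min hFv (by omega)
  have hwm1 : w (m + 1) = 0 := by
    have h2 : m + 1 = n₂ := by omega
    show ((LieAlgebra.ad F L f) ^ (m + 1)) v = 0
    rw [h2]; exact hn₂spec
  have hwwt : ∀ j : ℕ, w j ∈ wt F L T.toTData.H ((β' + (p : F) • β) + (j : F) • (-β)) :=
    fun j => T.toTData.ad_pow_wt hf hvwt j
  set a := T.toTData.pr β β with hadef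
  set lam := T.toTData.pr β' β with hlamdef
  have hprj : ∀ j : ℕ, T.toTData.pr ((β' + (p : F) • β) + (j : F) • (-β)) β
      = lam + ((p : F) - (j : F)) * a := by
    intro j
    rw [T.toTData.pr_add_left, T.toTData.pr_add_left, T.toTData.pr_smul_left,
      T.toTData.pr_smul_left, T.toTData.pr_neg_left]
    ring
  have hwsucc : ∀ j : ℕ, w (j + 1) = ⁅f, w j⁆ := by
    intro j
    show ((LieAlgebra.ad F L f) ^ (j + 1)) v = _
    rw [pow_succ', Module.End.mul_apply]
    rfl
  have hw0 : w 0 = v := by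
    show ((LieAlgebra.ad F L f) ^ 0) v = v
    simp
  have htw : ∀ j : ℕ, ⁅((T.toTData.t β : T.toTData.H) : L), w j⁆
      = (lam + ((p : F) - (j : F)) * a) • w j := by
    intro j
    rw [T.toTData.lie_t (hwwt j) β, hprj j]
  have main : ∀ j : ℕ, ⁅e, w (j + 1)⁆
      = (((j : F) + 1) * (lam + (p : F) * a) - ((((j : F) + 1) * (j : F)) / 2) * a) • w j := by
    intro j
    induction j with
    | zero =>
        rw [hwsucc 0, leibniz_lie, hef, htw 0, hw0, hev, lie_zero, add_zero]
        norm_num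
    | succ j ih =>
        rw [hwsucc (j + 1), leibniz_lie, hef, htw (j + 1), ih, lie_smul, ← hwsucc j,
          ← add_smul]
        congr 1
        push_cast
        ring
  have hC := main m
  rw [hwm1, lie_zero] at hC
  have hCz : (((m : F) + 1) * (lam + (p : F) * a) - ((((m : F) + 1) * (m : F)) / 2) * a) = 0 := by
    rcases smul_eq_zero.mp hC.symm with h | h
    · exact h
    · exact absurd h hwm
  refine ⟨(m : ℤ) - 2 * (p : ℤ), ?_⟩
  have hm1 : ((m : F) + 1) ≠ 0 := by exact_mod_cast Nat.cast_add_one_ne_zero (R := F) m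
  have hz : ((((m : ℤ) - 2 * (p : ℤ)) : ℤ) : F) = (m : F) - 2 * (p : F) := by push_cast; ring
  rw [hz]
  have hCz' : lam + (p : F) * a = (m : F) / 2 * a := by
    have h2 : ((m : F) + 1) * (lam + (p : F) * a) = ((m : F) + 1) * ((m : F) / 2 * a) := by
      linear_combination hCz
    exact mul_left_cancel₀ hm1 h2
  linear_combination 2 * hCz'

/-- Heisenberg non-nilpotency: given `[u,v] = t_μ` with `μ` isotropic acting with
nonzero "central charge" `c` on a string, `ad u` is injective along the string. -/
lemma heis {μ δ₀ : Module.Dual F T.toTData.H} (hμμ : T.toTData.pr μ μ = 0)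
    {c : F} (hc : T.toTData.pr δ₀ μ = c) (hc0 : c ≠ 0)
    {u v z : L} (hu : u ∈ wt F L T.toTData.H μ) (hv : v ∈ wt F L T.toTData.H (-μ))
    (huv : ⁅u, v⁆ = ((T.toTData.t μ : T.toTData.H) : L))
    (hz : z ∈ wt F L T.toTData.H δ₀) (hvz : ⁅v, z⁆ = 0) (hzne : z ≠ 0) :
    ∀ n : ℕ, ((LieAlgebra.ad F L u) ^ n) z ≠ 0 := by
  set A : ℕ → L := fun n => ((LieAlgebra.ad F L u) ^ n) z with hA
  have hAwt : ∀ n : ℕ, A n ∈ wt F L T.toTData.H (δ₀ + (n : F) • μ) :=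
    fun n => T.toTData.ad_pow_wt hu hz n
  have hAsucc : ∀ n : ℕ, A (n + 1) = ⁅u, A n⁆ := by
    intro n
    show ((LieAlgebra.ad F L u) ^ (n + 1)) z = _
    rw [pow_succ', Module.End.mul_apply]
    rfl
  have hA0 : A 0 = z := by
    show ((LieAlgebra.ad F L u) ^ 0) z = z
    simp
  have hprn : ∀ n : ℕ, T.toTData.pr (δ₀ + (n : F) • μ) μ = c := by
    intro n
    rw [T.toTData.pr_add_left, T.toTData.pr_smul_left, hμμ, hc]
    ring
  have htA : ∀ n : ℕ, ⁅((T.toTData.t μ : T.toTData.H) : L), A n⁆ = c • A n :=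
    fun n => by rw [T.toTData.lie_t (hAwt n) μ, hprn n]
  have hvu : ⁅v, u⁆ = -((T.toTData.t μ : T.toTData.H) : L) := by
    rw [← huv]
    exact (lie_skew v u).symm
  have main : ∀ n : ℕ, A n ≠ 0 ∧ ⁅v, A (n + 1)⁆ = (-((n : F) + 1) * c) • A n := by
    intro n
    induction n with
    | zero =>
        refine ⟨by rw [hA0]; exact hzne, ?_⟩
        rw [hAsucc 0, leibniz_lie, hvu, neg_lie, htA 0, hA0, hvz, lie_zero, add_zero]
        norm_num
    | succ n ih =>
        have hcoeff : (-((n : F) + 1) * c) ≠ 0 := by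
          apply mul_ne_zero _ hc0
          have h1 : ((n : F) + 1) ≠ 0 := by exact_mod_cast Nat.cast_add_one_ne_zero (R := F) n
          exact neg_ne_zero.mpr h1
        have hAn1 : A (n + 1) ≠ 0 := by
          intro h0
          have h1 := ih.2
          rw [h0, lie_zero] at h1
          exact ih.1 (by
            rcases smul_eq_zero.mp h1.symm with h | h
            · exact absurd h hcoeff
            · exact h)
        refine ⟨hAn1, ?_⟩
        rw [hAsucc (n + 1), leibniz_lie, hvu, neg_lie, htA (n + 1), ih.2, lie_smul,
          ← hAsucc n, ← neg_smul, ← add_smul]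
        congr 1
        push_cast
        ring
  intro n
  exact (main n).1

/-- From an infinite string of roots `ν + k μ` with `(ν,μ) ≠ 0`, `(μ,μ) = (ν,ν) = 0`,
derive a contradiction via integrality. -/
lemma line {μ ν : Module.Dual F T.toTData.H} (hμμ : T.toTData.pr μ μ = 0)
    (hνν : T.toTData.pr ν ν = 0) (hc : T.toTData.pr ν μ ≠ 0)
    (W : ∀ k : ℕ, 2 ≤ k → ∃ w : L, w ≠ 0 ∧ w ∈ wt F L T.toTData.H (ν + (k : F) • μ)) :
    False := by
  obtain ⟨w2, hw2ne, hw2⟩ := W 2 (le_refl 2)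
  obtain ⟨w3, hw3ne, hw3⟩ := W 3 (by omega)
  have hsym : T.toTData.pr μ ν = T.toTData.pr ν μ := T.toTData.pr_symm μ ν
  have hββ : T.toTData.pr (ν + ((2 : ℕ) : F) • μ) (ν + ((2 : ℕ) : F) • μ)
      = 4 * T.toTData.pr ν μ := by
    simp only [T.toTData.pr_add_left, T.toTData.pr_add_right, T.toTData.pr_smul_left,
      T.toTData.pr_smul_right, hμμ, hνν, hsym]
    push_cast
    ring
  have hβ'β : T.toTData.pr (ν + ((3 : ℕ) : F) • μ) (ν + ((2 : ℕ) : F) • μ)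
      = 5 * T.toTData.pr ν μ := by
    simp only [T.toTData.pr_add_left, T.toTData.pr_add_right, T.toTData.pr_smul_left,
      T.toTData.pr_smul_right, hμμ, hνν, hsym]
    push_cast
    ring
  have h4c : T.toTData.pr (ν + ((2 : ℕ) : F) • μ) (ν + ((2 : ℕ) : F) • μ) ≠ 0 := by
    rw [hββ]
    intro h0
    rcases mul_eq_zero.mp h0 with h | h
    · norm_num at h
    · exact hc h
  obtain ⟨z, hzeq⟩ := T.int_lemma h4c hw2 hw2ne hw3 hw3ne
  rw [hββ, hβ'β] at hzeq
  have h0 : ((10 : F) - (z : F) * 4) * (T.toTData.pr ν μ) = 0 := by linear_combination hzeq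
  have h1 : (10 : F) - (z : F) * 4 = 0 := by
    rcases mul_eq_zero.mp h0 with h | h
    · exact h
    · exact absurd h hc
  have h10' : (10 : ℤ) - z * 4 = 0 := by exact_mod_cast h1
  omega

/-- Two isotropic roots are orthogonal. -/
lemma ortho {μ ν : Module.Dual F T.toTData.H} (hμμ : T.toTData.pr μ μ = 0)
    (hνν : T.toTData.pr ν ν = 0) (hpr : T.toTData.pr μ ν ≠ 0)
    {x y : L} (hx : x ∈ wt F L T.toTData.H μ) (hxne : x ≠ 0)
    (hy : y ∈ wt F L T.toTData.H ν) (hyne : y ≠ 0) : False := by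
  have hμR0 : μ ∈ T.toTData.R0 := ⟨(Submodule.ne_bot_iff _).mpr ⟨x, hx, hxne⟩, hμμ⟩
  obtain ⟨u, hu, v, hv, huv⟩ := T.t3a μ hμR0
  have hcν : T.toTData.pr ν μ ≠ 0 := by rw [T.toTData.pr_symm]; exact hpr
  by_cases hAll : ∀ n : ℕ, ((LieAlgebra.ad F L v) ^ n) y ≠ 0
  · -- case B : the string goes down forever
    have hμ'μ' : T.toTData.pr (-μ) (-μ) = 0 := by
      rw [T.toTData.pr_neg_left, T.toTData.pr_neg_right, neg_neg, hμμ]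
    have hc' : T.toTData.pr ν (-μ) ≠ 0 := by
      rw [T.toTData.pr_neg_right]
      simpa using hcν
    apply T.line hμ'μ' hνν hc'
    intro k hk
    exact ⟨((LieAlgebra.ad F L v) ^ k) y, hAll k, T.toTData.ad_pow_wt hv hy k⟩
  · -- case A : use the Heisenberg relation to go up forever
    push_neg at hAll
    have hEx : ∃ n : ℕ, ((LieAlgebra.ad F L v) ^ n) y = 0 := hAll
    set n₂ := Nat.find hEx with hn₂def
    have hn₂spec : ((LieAlgebra.ad F L v) ^ n₂) y = 0 := Nat.find_spec hEx
    have hn₂pos : 0 < n₂ := by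
      rcases Nat.eq_zero_or_pos n₂ with h | h
      · exfalso; apply hyne; rw [h] at hn₂spec; simpa using hn₂spec
      · exact h
    set m := n₂ - 1 with hmdef
    set z := ((LieAlgebra.ad F L v) ^ m) y with hzdef
    have hzne : z ≠ 0 := Nat.find_min hEx (by omega)
    have hvz : ⁅v, z⁆ = 0 := by
      have h1 : ((LieAlgebra.ad F L v) ^ (m + 1)) y = 0 := by
        have h2 : m + 1 = n₂ := by omega
        rw [h2]; exact hn₂spec
      rw [pow_succ', Module.End.mul_apply] at h1
      simpa [LieAlgebra.ad_apply] using h1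
    have hzwt : z ∈ wt F L T.toTData.H (ν + (m : F) • (-μ)) := T.toTData.ad_pow_wt hv hy m
    have hδ₀ : T.toTData.pr (ν + (m : F) • (-μ)) μ = T.toTData.pr ν μ := by
      rw [T.toTData.pr_add_left, T.toTData.pr_smul_left, T.toTData.pr_neg_left, hμμ]
      ring
    have hstr := T.heis hμμ hδ₀ hcν hu hv huv hzwt hvz hzne
    apply T.line hμμ hνν hcν
    intro k hk
    refine ⟨((LieAlgebra.ad F L u) ^ (k + m)) z, hstr (k + m), ?_⟩
    have hmem := T.toTData.ad_pow_wt hu hzwt (k + m)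
    have heq : (ν + (m : F) • (-μ)) + ((k + m : ℕ) : F) • μ = ν + (k : F) • μ := by
      push_cast
      module
    rw [wt_congr heq] at hmem
    exact hmem

end TAlg

end Gen
namespace Gen

namespace TAlg

variable {F L : Type*} [Field F] [CharZero F] [LieRing L] [LieAlgebra F L]
variable (T : TAlg F L)

/-- Functionals with non-isotropic norm. -/
def X : Set (Module.Dual F T.toTData.H) := {α | T.toTData.pr α α ≠ 0}

/-- The candidate submodule for the core. -/
def MM : Submodule F L :=
  Submodule.span F
    ((⋃ α ∈ T.X, (wt F L T.toTData.H α : Set L)) ∪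
      {z : L | ∃ α ∈ T.X, ∃ β ∈ T.X, ∃ a ∈ wt F L T.toTData.H α, ∃ b ∈ wt F L T.toTData.H β,
        ⁅a, b⁆ = z})

lemma mem_MM_of_wt {α : Module.Dual F T.toTData.H} (hα : α ∈ T.X) {x : L}
    (hx : x ∈ wt F L T.toTData.H α) : x ∈ T.MM :=
  Submodule.subset_span (Or.inl (Set.mem_biUnion hα hx))

lemma mem_MM_of_lie {α β : Module.Dual F T.toTData.H} (hα : α ∈ T.X) (hβ : β ∈ T.X)
    {a b : L} (ha : a ∈ wt F L T.toTData.H α) (hb : b ∈ wt F L T.toTData.H β) :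
    ⁅a, b⁆ ∈ T.MM :=
  Submodule.subset_span (Or.inr ⟨α, hα, β, hβ, a, ha, b, hb, rfl⟩)

/-- Key lemma: the bracket of any weight vector with a weight vector of
non-isotropic weight lies in `MM`. -/
lemma key {μ γ : Module.Dual F T.toTData.H} (hγ : γ ∈ T.X) {x e : L}
    (hx : x ∈ wt F L T.toTData.H μ) (he : e ∈ wt F L T.toTData.H γ) :
    ⁅x, e⁆ ∈ T.MM := by
  by_cases hν : T.toTData.pr (μ + γ) (μ + γ) ≠ 0
  · exact T.mem_MM_of_wt hν (lie_wt hx he)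
  by_cases hμ : T.toTData.pr μ μ ≠ 0
  · exact T.mem_MM_of_lie hμ hγ hx he
  push_neg at hν hμ
  rcases eq_or_ne ⁅x, e⁆ 0 with h | h
  · rw [h]; exact T.MM.zero_mem
  exfalso
  have hxne : x ≠ 0 := by rintro rfl; rw [zero_lie] at h; exact h rfl
  have hsym : T.toTData.pr γ μ = T.toTData.pr μ γ := T.toTData.pr_symm γ μ
  have hexp : T.toTData.pr (μ + γ) (μ + γ)
      = T.toTData.pr μ μ + 2 * T.toTData.pr μ γ + T.toTData.pr γ γ := by
    simp only [T.toTData.pr_add_left, T.toTData.pr_add_right, hsym]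
    ring
  have hprμν : T.toTData.pr μ (μ + γ) ≠ 0 := by
    rw [T.toTData.pr_add_right, hμ, zero_add]
    intro h0
    have hγ' : T.toTData.pr γ γ ≠ 0 := hγ
    rw [hexp, hμ, h0] at hν
    have hγγ : T.toTData.pr γ γ = 0 := by linear_combination hν
    exact hγ' hγγ
  exact T.ortho hμ hν hprμν hx hxne (lie_wt hx he) h

lemma lie_wt_mem_MM {μ : Module.Dual F T.toTData.H} {x : L}
    (hx : x ∈ wt F L T.toTData.H μ) : ∀ m ∈ T.MM, ⁅x, m⁆ ∈ T.MM := by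
  intro m hm
  have hm' : m ∈ Submodule.span F
    ((⋃ α ∈ T.X, (wt F L T.toTData.H α : Set L)) ∪
      {z : L | ∃ α ∈ T.X, ∃ β ∈ T.X, ∃ a ∈ wt F L T.toTData.H α, ∃ b ∈ wt F L T.toTData.H β,
        ⁅a, b⁆ = z}) := hm
  clear hm
  induction hm' using Submodule.span_induction with
  | mem y hy =>
      rcases hy with hy | hy
      · simp only [Set.mem_iUnion] at hy
        obtain ⟨γ, hγ, hy⟩ := hy
        exact T.key hγ hx hy
      · obtain ⟨α, hα, β, hβ, a, ha, b, hb, rfl⟩ := hy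
        rw [leibniz_lie x a b]
        apply T.MM.add_mem
        · exact T.key hβ (lie_wt hx ha) hb
        · rw [← lie_skew]
          exact T.MM.neg_mem (T.key hα (lie_wt hx hb) ha)
  | zero => rw [lie_zero]; exact T.MM.zero_mem
  | add y z _ _ hy hz => rw [lie_add]; exact T.MM.add_mem hy hz
  | smul c y _ hy => rw [lie_smul]; exact T.MM.smul_mem c hy

lemma lie_mem_MM_all (x : L) : ∀ m ∈ T.MM, ⁅x, m⁆ ∈ T.MM := by
  intro m hm
  have hx : x ∈ ⨆ α, wt F L T.toTData.H α := by
    rw [T.toTData.decomp.submodule_iSup_eq_top]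
    exact Submodule.mem_top
  refine Submodule.iSup_induction (motive := fun y => ⁅y, m⁆ ∈ T.MM) (wt F L T.toTData.H) hx ?_ ?_ ?_
  · intro μ y hy
    exact T.lie_wt_mem_MM hy m hm
  · show ⁅(0 : L), m⁆ ∈ T.MM
    rw [zero_lie]
    exact T.MM.zero_mem
  · intro y z hy hz
    show ⁅y + z, m⁆ ∈ T.MM
    rw [add_lie]
    exact T.MM.add_mem hy hz

/-- `MM` as a Lie subalgebra. -/
def MMsub : LieSubalgebra F L :=
  { T.MM with lie_mem' := fun {x y} _ hy => T.lie_mem_MM_all x y hy }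

lemma wt_subset_core {α : Module.Dual F T.toTData.H} (hα : α ∈ T.X) :
    (wt F L T.toTData.H α : Set L) ⊆ ↑T.toTData.core := by
  by_cases hbot : wt F L T.toTData.H α = ⊥
  · intro x hx
    rw [hbot] at hx
    have hx0 : x = 0 := by simpa using hx
    rw [hx0]
    exact T.toTData.core.zero_mem
  · intro x hx
    apply LieSubalgebra.subset_lieSpan
    exact Set.mem_biUnion (show α ∈ T.toTData.Rx from ⟨hbot, hα⟩) hx

lemma mem_core_iff_mem_MM (w : L) : w ∈ T.toTData.core ↔ w ∈ T.MM := by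
  constructor
  · intro hw
    have hle : T.toTData.core ≤ T.MMsub := by
      rw [TData.core, LieSubalgebra.lieSpan_le]
      intro y hy
      simp only [Set.mem_iUnion] at hy
      obtain ⟨γ, hγ, hy⟩ := hy
      exact T.mem_MM_of_wt hγ.2 hy
    exact hle hw
  · intro hw
    have hle : T.MM ≤ T.toTData.core.toSubmodule := by
      apply Submodule.span_le.mpr
      rintro y (hy | hy)
      · simp only [Set.mem_iUnion] at hy
        obtain ⟨γ, hγ, hy⟩ := hy
        exact T.wt_subset_core hγ hy
      · obtain ⟨α, hα, β, hβ, a, ha, b, hb, rfl⟩ := hy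
        exact (T.toTData.core).lie_mem (T.wt_subset_core hα ha) (T.wt_subset_core hβ hb)
    exact hle hw

end TAlg

end Gen


/-- For `L ∈ 𝒯`, the core `L_c` is a perfect ideal of `L`:
`[L, L_c] ⊆ L_c` and `[L_c, L_c] = L_c`. -/
theorem core_perfect_ideal
    (F L : Type*) [Field F] [CharZero F] [LieRing L] [LieAlgebra F L]
    (T : Gen.TAlg F L) :
    (∀ x : L, ∀ y ∈ T.toTData.core, ⁅x, y⁆ ∈ T.toTData.core) ∧
    (Submodule.span F {z : L | ∃ x ∈ T.toTData.core, ∃ y ∈ T.toTData.core, ⁅x, y⁆ = z}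
      = (T.toTData.core : Submodule F L)) := by
  constructor
  · intro x y hy
    exact (T.mem_core_iff_mem_MM ⁅x, y⁆).mpr
      (T.lie_mem_MM_all x y ((T.mem_core_iff_mem_MM y).mp hy))
  · apply le_antisymm
    · apply Submodule.span_le.mpr
      rintro z ⟨x, hx, y, hy, rfl⟩
      have h1 : ⁅x, y⁆ ∈ T.toTData.core := (T.toTData.core).lie_mem hx hy
      simpa using h1
    · have hle : T.MM ≤ Submodule.span F
          {z : L | ∃ x ∈ T.toTData.core, ∃ y ∈ T.toTData.core, ⁅x, y⁆ = z} := by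
        apply Submodule.span_le.mpr
        rintro z (hz | hz)
        · simp only [Set.mem_iUnion] at hz
          obtain ⟨α, hα, hz⟩ := hz
          rcases eq_or_ne z 0 with rfl | hzne
          · exact Submodule.zero_mem _
          · have hαR : α ∈ T.toTData.Rx := ⟨(Submodule.ne_bot_iff _).mpr ⟨z, hz, hzne⟩, hα⟩
            obtain ⟨f, hf, hzf⟩ := T.t3b α hαR z hz hzne
            have hzcore : z ∈ T.toTData.core := T.wt_subset_core hα hz
            have hnegX : -α ∈ T.X := by
              show T.toTData.pr (-α) (-α) ≠ 0
              rw [T.toTData.pr_neg_left, T.toTData.pr_neg_right, neg_neg]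
              exact hα
            have hfcore : f ∈ T.toTData.core := T.wt_subset_core hnegX hf
            have hbr : ⁅⁅z, f⁆, z⁆ ∈
                {w : L | ∃ x ∈ T.toTData.core, ∃ y ∈ T.toTData.core, ⁅x, y⁆ = w} :=
              ⟨⁅z, f⁆, (T.toTData.core).lie_mem hzcore hfcore, z, hzcore, rfl⟩
            have hid : ⁅⁅z, f⁆, z⁆ = T.toTData.pr α α • z := by
              rw [hzf]
              exact T.toTData.lie_t hz α
            have hrepr : z = (T.toTData.pr α α)⁻¹ • ⁅⁅z, f⁆, z⁆ := by
              rw [hid, smul_smul, inv_mul_cancel₀ hα, one_smul]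
            rw [hrepr]
            exact Submodule.smul_mem _ _ (Submodule.subset_span hbr)
        · obtain ⟨α, hα, β, hβ, a, ha, b, hb, rfl⟩ := hz
          exact Submodule.subset_span
            ⟨a, T.wt_subset_core hα ha, b, T.wt_subset_core hβ hb, rfl⟩
      intro w hw
      exact hle ((T.mem_core_iff_mem_MM w).mp ((LieSubalgebra.mem_toSubmodule (L' := _)).mp hw))
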